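/- Every extreme point of the multicommodity flow polytope P_n has all coordinates equal to 0 or 1. -/

import Mathlib

open Finset

/-- A point of the multicommodity flow LP: the first component gives the flow
variables `f^k_{x_i x_j}` (as `f.1 k i j`), the second the terminal-edge flow
variables `f^i_{t_i x_i}` (as `f.2 i`). Literal indices live in `Fin (2*n)`. -/
abbrev FlowPt (n : ℕ) := (Fin (2*n) → Fin (2*n) → Fin (2*n) → ℝ) × (Fin (2*n) → ℝ)

/-- The index `n + i` taken mod `2n`, i.e. the index of the negation of literal `i`. -/
def negIdx {n : ℕ} (i : Fin (2*n)) : Fin (2*n) :=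
  ⟨((i : ℕ) + n) % (2*n), Nat.mod_lt _ (Nat.lt_of_le_of_lt (Nat.zero_le _) i.isLt)⟩

/-- The multicommodity flow polytope `P_n`: `0 ≤ f^i_{t_i x_i} ≤ 1`,
`f^k_{x_i x_j} ≥ 0`, the (nonexistent) diagonal coordinates `f^k_{x_i x_i}` are
pinned to `0`, and for all `i, k` the conservation equation
`δ_{i,k}·f^i_{t_i x_i} + Σ_{j≠i} f^k_{x_j x_i}
  = Σ_{j≠i} f^k_{x_i x_j} + δ_{n+i,k}·f^{n+i}_{t_{n+i} x_{n+i}}` holds. -/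
def Pn (n : ℕ) : Set (FlowPt n) :=
  {f | (∀ i, 0 ≤ f.2 i ∧ f.2 i ≤ 1) ∧
       (∀ k i j, 0 ≤ f.1 k i j) ∧
       (∀ k i, f.1 k i i = 0) ∧
       (∀ i k, (if i = k then f.2 i else 0) + ∑ j ∈ univ.erase i, f.1 k j i
          = ∑ j ∈ univ.erase i, f.1 k i j
            + (if negIdx i = k then f.2 (negIdx i) else 0))}


section Abstract

variable {V : Type*} [DecidableEq V]

/-- Indicator (as a real-valued function) of the consecutive pairs of a list. -/
def pInd : List V → V → V → ℝ
  | x :: y :: rest => fun u v => (if u = x ∧ v = y then (1:ℝ) else 0) + pInd (y :: rest) u v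
  | _ => fun _ _ => 0

@[simp] lemma pInd_nil : pInd ([] : List V) = fun _ _ => 0 := rfl

@[simp] lemma pInd_single (x : V) : pInd [x] = fun _ _ => 0 := rfl

lemma pInd_cons (x y : V) (rest : List V) (u v : V) :
    pInd (x :: y :: rest) u v =
      (if u = x ∧ v = y then (1:ℝ) else 0) + pInd (y :: rest) u v := rfl

lemma pInd_nonneg : ∀ (l : List V) (u v : V), 0 ≤ pInd l u v := by
  intro l
  induction l with
  | nil => simp
  | cons x rest ih =>
    cases rest with
    | nil => simp
    | cons y rest' =>
      intro u v
      simp only [pInd_cons]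
      have := ih u v
      positivity

lemma pInd_mem_left : ∀ (l : List V) (u v : V), pInd l u v ≠ 0 → u ∈ l := by
  intro l
  induction l with
  | nil => simp
  | cons x rest ih =>
    cases rest with
    | nil => simp
    | cons y rest' =>
      intro u v h
      rw [pInd_cons] at h
      by_cases h1 : u = x ∧ v = y
      · simp [h1.1]
      · rw [if_neg h1, zero_add] at h
        exact List.mem_cons_of_mem _ (ih u v h)

lemma pInd_support {r : V → V → Prop} :
    ∀ (l : List V), l.Chain' r → ∀ (u v : V), pInd l u v ≠ 0 → r u v := by
  intro l
  induction l with
  | nil => simp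
  | cons x rest ih =>
    cases rest with
    | nil => simp
    | cons y rest' =>
      intro hc u v h
      replace hc := List.isChain_cons_cons.1 hc
      rw [pInd_cons] at h
      by_cases h1 : u = x ∧ v = y
      · rw [h1.1, h1.2]; exact hc.1
      · rw [if_neg h1, zero_add] at h
        exact ih hc.2 u v h

lemma pInd_zero_or_one :
    ∀ (l : List V), l.Nodup → ∀ (u v : V), pInd l u v = 0 ∨ pInd l u v = 1 := by
  intro l
  induction l with
  | nil => simp
  | cons x rest ih =>
    cases rest with
    | nil => simp
    | cons y rest' =>
      intro hnd u v
      rw [List.nodup_cons] at hnd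
      simp only [pInd_cons]
      by_cases h1 : u = x ∧ v = y
      · have h0 : pInd (y :: rest') u v = 0 := by
          by_contra hne
          exact hnd.1 (h1.1 ▸ pInd_mem_left _ u v hne)
        rw [if_pos h1, h0]; right; norm_num
      · rw [if_neg h1, zero_add]; exact ih hnd.2 u v

variable [Fintype V]

lemma pInd_outsum :
    ∀ (l : List V) (hne : l ≠ []), l.Nodup → ∀ u : V,
      ∑ v, pInd l u v = if u ∈ l ∧ u ≠ l.getLast hne then 1 else 0 := by
  intro l
  induction l with
  | nil => simp
  | cons x rest ih =>
    cases rest with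
    | nil =>
      intro hne _ u
      simp
    | cons y rest' =>
      intro hne hnd u
      rw [List.nodup_cons] at hnd
      have hlast : (x :: y :: rest').getLast hne = (y :: rest').getLast (by simp) :=
        List.getLast_cons (by simp)
      simp only [pInd_cons]
      rw [Finset.sum_add_distrib]
      have h1 : ∑ v, (if u = x ∧ v = y then (1:ℝ) else 0) = if u = x then 1 else 0 := by
        by_cases hux : u = x
        · simp [hux]
        · simp [hux]
      rw [h1, ih (by simp) hnd.2 u, hlast]
      by_cases hux : u = x
      · subst hux
        have h2 : u ∉ y :: rest' := hnd.1
        have h3 : (y :: rest').getLast (by simp) ∈ y :: rest' := List.getLast_mem _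
        have h4 : u ≠ (y :: rest').getLast (by simp) := fun h => h2 (h ▸ h3)
        simp [h2, h4]
      · have : (u ∈ x :: y :: rest') ↔ (u ∈ y :: rest') := by simp [hux]
        simp only [if_neg hux, zero_add, this]
  
lemma pInd_insum :
    ∀ (l : List V) (hne : l ≠ []), l.Nodup → ∀ v : V,
      ∑ u, pInd l u v = if v ∈ l ∧ v ≠ l.head hne then 1 else 0 := by
  intro l
  induction l with
  | nil => simp
  | cons x rest ih =>
    cases rest with
    | nil =>
      intro hne _ v
      simp only [pInd_single]
      simp
    | cons y rest' =>
      intro hne hnd v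
      rw [List.nodup_cons] at hnd
      simp only [pInd_cons]
      rw [Finset.sum_add_distrib]
      have h1 : ∑ u, (if u = x ∧ v = y then (1:ℝ) else 0) = if v = y then 1 else 0 := by
        by_cases hvy : v = y
        · simp [hvy]
        · simp [hvy]
      rw [h1, ih (by simp) hnd.2 v]
      simp only [List.head_cons]
      by_cases hvy : v = y
      · subst hvy
        have hxy : x ≠ v := fun h => hnd.1 (h ▸ List.mem_cons_self)
        simp [hxy.symm]
      · rw [if_neg hvy, zero_add]
        by_cases hvx : v = x
        · subst hvx
          have : v ∉ y :: rest' := hnd.1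
          simp [this]
        · have : (v ∈ x :: y :: rest') ↔ (v ∈ y :: rest') := by simp [hvx]
          simp [this, hvy, hvx]

lemma pInd_getLast_row (l : List V) (hne : l ≠ []) (hnd : l.Nodup) (v : V) :
    pInd l (l.getLast hne) v = 0 := by
  have hsum : ∑ w, pInd l (l.getLast hne) w = 0 := by
    rw [pInd_outsum l hne hnd]
    simp
  have := (Finset.sum_eq_zero_iff_of_nonneg (fun w _ => pInd_nonneg l _ w)).1 hsum
  exact this v (Finset.mem_univ v)

/-- In a nonnegative circulation, the head of a positive arc reaches the tail. -/
lemma cut_reach (c : V → V → ℝ) (hpos : ∀ i j, 0 ≤ c i j)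
    (hcons : ∀ i, ∑ j, c j i = ∑ j, c i j) {a b : V} (hab : 0 < c a b) :
    Relation.ReflTransGen (fun x y => 0 < c x y) b a := by
  classical
  set r : V → V → Prop := fun x y => 0 < c x y with hr
  by_contra hna
  set S : Finset V := univ.filter (fun x => Relation.ReflTransGen r b x) with hS
  have hbS : b ∈ S := by
    simp only [hS, Finset.mem_filter, Finset.mem_univ, true_and]
    exact Relation.ReflTransGen.refl
  have haS : a ∉ S := by simp [hS]; exact hna
  have hout : ∀ x ∈ S, ∀ y ∈ Sᶜ, c x y = 0 := by
    intro x hx y hy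
    by_contra h
    have hpos' : r x y := lt_of_le_of_ne (hpos x y) (Ne.symm h)
    have hx' : Relation.ReflTransGen r b x := by
      simpa [hS] using hx
    have : y ∈ S := by simp [hS]; exact hx'.tail hpos'
    rw [Finset.mem_compl] at hy
    exact hy this
  have h1 : ∑ x ∈ S, ∑ j, c j x = ∑ x ∈ S, ∑ j, c x j :=
    Finset.sum_congr rfl fun x _ => hcons x
  have hsplit : ∀ g : V → V → ℝ,
      ∑ x ∈ S, ∑ j, g x j = ∑ x ∈ S, ∑ j ∈ S, g x j + ∑ x ∈ S, ∑ j ∈ Sᶜ, g x j := by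
    intro g
    rw [← Finset.sum_add_distrib]
    exact Finset.sum_congr rfl fun x _ => (Finset.sum_add_sum_compl S (g x)).symm
  rw [hsplit, hsplit] at h1
  have hswap : ∑ x ∈ S, ∑ j ∈ S, c j x = ∑ x ∈ S, ∑ j ∈ S, c x j := Finset.sum_comm
  have hzero : ∑ x ∈ S, ∑ j ∈ Sᶜ, c x j = 0 :=
    Finset.sum_eq_zero fun x hx => Finset.sum_eq_zero fun j hj => hout x hx j hj
  have hin : ∑ x ∈ S, ∑ j ∈ Sᶜ, c j x = 0 := by linarith
  have hterm : c a b = 0 := by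
    have hnn : ∀ x ∈ S, 0 ≤ ∑ j ∈ Sᶜ, c j x :=
      fun x _ => Finset.sum_nonneg fun j _ => hpos j x
    have h2 := (Finset.sum_eq_zero_iff_of_nonneg hnn).1 hin b hbS
    have hnn2 : ∀ j ∈ Sᶜ, 0 ≤ c j b := fun j _ => hpos j b
    exact (Finset.sum_eq_zero_iff_of_nonneg hnn2).1 h2 a (Finset.mem_compl.2 haS)
  linarith

/-- Every `ReflTransGen` witness can be realized by a `Nodup` chain. -/
lemma exists_nodup_path {α : Type*} {r : α → α → Prop} {b a : α}
    (h : Relation.ReflTransGen r b a) :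
    ∃ (l : List α) (hne : l ≠ []),
      l.Chain' r ∧ l.head hne = b ∧ l.getLast hne = a ∧ l.Nodup := by
  induction h with
  | refl => exact ⟨[b], by simp, List.isChain_singleton b, rfl, rfl, by simp⟩
  | @tail x a hbx hxa ih =>
    obtain ⟨l, hne, hchain, hhead, hlast, hnd⟩ := ih
    by_cases ha : a ∈ l
    · obtain ⟨s, t, hst⟩ := List.append_of_mem ha
      subst hst
      have hpre : (s ++ [a]) <+: s ++ a :: t := ⟨t, by simp⟩
      refine ⟨s ++ [a], by simp, hchain.prefix hpre, ?_, ?_, ?_⟩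
      · cases s with
        | nil => simpa using hhead
        | cons z s' => simpa using hhead
      · exact List.getLast_append_singleton _
      · exact hnd.sublist hpre.sublist
    · refine ⟨l ++ [a], by simp, ?_, ?_, ?_, ?_⟩
      · refine List.IsChain.append hchain (List.isChain_singleton a) ?_
        intro p hp q hq
        simp only [List.head?_cons, Option.mem_def, Option.some.injEq] at hq
        rw [List.getLast?_eq_getLast_of_ne_nil hne, Option.mem_def, Option.some.injEq] at hp
        rw [← hq, ← hp, hlast]
        exact hxa
      · rw [← hhead]
        cases l with
        | nil => exact absurd rfl hne
        | cons z l' => simp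
      · exact List.getLast_append_singleton _
      · refine List.nodup_append.2 ⟨hnd, by simp, fun z hz b hb => ?_⟩
        rw [List.mem_singleton] at hb
        rintro rfl
        exact ha (hb ▸ hz)

end Abstract

section Flow

variable {n : ℕ}

lemma negIdx_negIdx (i : Fin (2*n)) : negIdx (negIdx i) = i := by
  unfold negIdx
  apply Fin.ext
  simp only
  rw [Nat.mod_add_mod]
  have : (i : ℕ) + n + n = (i : ℕ) + 2*n := by ring
  rw [this, Nat.add_mod_right, Nat.mod_eq_of_lt i.isLt]

lemma negIdx_ne (hn : 0 < n) (i : Fin (2*n)) : negIdx i ≠ i := by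
  intro h
  have h' : ((i : ℕ) + n) % (2*n) = i := congrArg Fin.val h
  rcases Nat.lt_or_ge ((i : ℕ) + n) (2*n) with hlt | hge
  · rw [Nat.mod_eq_of_lt hlt] at h'; omega
  · have h2 : ((i : ℕ) + n) % (2*n) = ((i : ℕ) + n - 2*n) % (2*n) :=
      Nat.mod_eq_sub_mod hge
    have h3 : (i : ℕ) + n - 2*n < 2*n := by omega
    rw [h2, Nat.mod_eq_of_lt h3] at h'
    omega

lemma negIdx_eq_iff (i k : Fin (2*n)) : negIdx i = k ↔ i = negIdx k := by
  constructor
  · intro h; rw [← h, negIdx_negIdx]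
  · intro h; rw [h, negIdx_negIdx]

lemma mem_Pn_iff (f : FlowPt n) :
    f ∈ Pn n ↔ (∀ i, 0 ≤ f.2 i ∧ f.2 i ≤ 1) ∧ (∀ k i j, 0 ≤ f.1 k i j) ∧
      (∀ k i, f.1 k i i = 0) ∧
      (∀ i k, (if i = k then f.2 i else 0) + ∑ j, f.1 k j i
        = ∑ j, f.1 k i j + (if negIdx i = k then f.2 (negIdx i) else 0)) := by
  constructor <;> rintro ⟨h1, h2, h3, h4⟩ <;> refine ⟨h1, h2, h3, fun i k => ?_⟩
  · have h := h4 i k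
    rwa [Finset.sum_erase (f := fun j => f.1 k j i) _ (h3 k i),
      Finset.sum_erase (f := fun j => f.1 k i j) _ (h3 k i)] at h
  · have h := h4 i k
    rwa [← Finset.sum_erase (f := fun j => f.1 k j i) univ (h3 k i),
      ← Finset.sum_erase (f := fun j => f.1 k i j) univ (h3 k i)] at h

lemma extreme_perturb {f : FlowPt n} (hf : f ∈ Set.extremePoints ℝ (Pn n))
    {d : FlowPt n} {ε : ℝ} (hε : 0 < ε) (h1 : f + ε • d ∈ Pn n) (h2 : f - ε • d ∈ Pn n) :
    d = 0 := by
  have hseg : f ∈ openSegment ℝ (f + ε • d) (f - ε • d) := by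
    refine ⟨1/2, 1/2, by norm_num, by norm_num, by norm_num, ?_⟩
    module
  have heq := hf.2 h1 h2 hseg
  have h0 : ε • d = 0 := by
    have := congrArg (fun z => z - f) heq
    simpa using this
  rcases smul_eq_zero.mp h0 with h | h
  · exact absurd h (ne_of_gt hε)
  · exact h

end Flow

section Perturb

variable {n : ℕ}

lemma perturb_zero (hn : 2 ≤ n) {f : FlowPt n} (hf : f ∈ Set.extremePoints ℝ (Pn n))
    (d : FlowPt n)
    (hdiag : ∀ k i, d.1 k i i = 0)
    (hcons : ∀ i k, (if i = k then d.2 i else 0) + ∑ j, d.1 k j i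
        = ∑ j, d.1 k i j + (if negIdx i = k then d.2 (negIdx i) else 0))
    (hs1 : ∀ k i j, d.1 k i j ≠ 0 → 0 < f.1 k i j)
    (hs2 : ∀ i, d.2 i ≠ 0 → 0 < f.2 i ∧ f.2 i < 1) :
    d = 0 := by
  classical
  obtain ⟨hb, hnn, hdg, hcv⟩ := (mem_Pn_iff f).1 hf.1
  have hpos2n : 0 < 2*n := by omega
  haveI : Nonempty (Fin (2*n)) := ⟨⟨0, hpos2n⟩⟩
  set ι := (Fin (2*n) × Fin (2*n) × Fin (2*n)) ⊕ Fin (2*n) with hι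
  haveI : Nonempty ι := ⟨Sum.inr (Classical.arbitrary _)⟩
  set bnd : ι → ℝ := fun idx => match idx with
    | Sum.inl (k, i, j) => f.1 k i j
    | Sum.inr i => min (f.2 i) (1 - f.2 i) with hbnd
  set dv : ι → ℝ := fun idx => match idx with
    | Sum.inl (k, i, j) => |d.1 k i j|
    | Sum.inr i => |d.2 i| with hdv
  have hdvnn : ∀ idx, 0 ≤ dv idx := by
    rintro (⟨k, i, j⟩ | i) <;> simp [hdv]
  have hbndpos : ∀ idx, dv idx ≠ 0 → 0 < bnd idx := by
    rintro (⟨k, i, j⟩ | i) h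
    · simp only [hdv, abs_ne_zero] at h
      exact hs1 k i j h
    · simp only [hdv, abs_ne_zero] at h
      obtain ⟨h1, h2⟩ := hs2 i h
      exact lt_min h1 (by linarith)
  set q : ι → ℝ := fun idx => if dv idx = 0 then 1 else bnd idx / dv idx with hq
  set ε : ℝ := Finset.univ.inf' Finset.univ_nonempty q with hε
  have hεpos : 0 < ε := by
    rw [hε, Finset.lt_inf'_iff]
    intro idx _
    simp only [hq]
    split_ifs with h
    · norm_num
    · exact div_pos (hbndpos idx h) (lt_of_le_of_ne (hdvnn idx) (Ne.symm h))
  have hkey : ∀ idx, ε * dv idx ≤ bnd idx := by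
    intro idx
    by_cases h : dv idx = 0
    · rw [h, mul_zero]
      rcases eq_or_ne (dv idx) 0 with _ | h'
      · -- bnd nonneg always
        rcases idx with ⟨k, i, j⟩ | i
        · exact hnn k i j
        · have := hb i; simp only [hbnd, le_min_iff]; constructor <;> [exact this.1; linarith [this.2]]
      · exact (hbndpos idx h').le
    · have hdvpos : 0 < dv idx := lt_of_le_of_ne (hdvnn idx) (Ne.symm h)
      have hle : ε ≤ q idx := by
        rw [hε]
        exact Finset.inf'_le _ (Finset.mem_univ idx)
      simp only [hq, if_neg h] at hle
      exact (le_div_iff₀ hdvpos).1 hle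
  have habs1 : ∀ k i j, ε * |d.1 k i j| ≤ f.1 k i j := fun k i j => hkey (Sum.inl (k, i, j))
  have habs2 : ∀ i, ε * |d.2 i| ≤ min (f.2 i) (1 - f.2 i) := fun i => hkey (Sum.inr i)
  have hmem : ∀ s : ℝ, |s| ≤ ε → f + s • d ∈ Pn n := by
    intro s hs
    rw [mem_Pn_iff]
    have hsd : ∀ i : Fin (2*n), |s * d.2 i| ≤ min (f.2 i) (1 - f.2 i) := by
      intro i
      rw [abs_mul]
      calc |s| * |d.2 i| ≤ ε * |d.2 i| :=
            mul_le_mul_of_nonneg_right hs (abs_nonneg _)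
        _ ≤ _ := habs2 i
    have hsd1 : ∀ k i j, |s * d.1 k i j| ≤ f.1 k i j := by
      intro k i j
      rw [abs_mul]
      calc |s| * |d.1 k i j| ≤ ε * |d.1 k i j| :=
            mul_le_mul_of_nonneg_right hs (abs_nonneg _)
        _ ≤ _ := habs1 k i j
    simp only [Prod.fst_add, Prod.snd_add, Prod.smul_fst, Prod.smul_snd, Pi.add_apply,
      Pi.smul_apply, smul_eq_mul]
    refine ⟨fun i => ?_, fun k i j => ?_, fun k i => ?_, fun i k => ?_⟩
    · have h5 := abs_le.1 (hsd i)
      have h6 : min (f.2 i) (1 - f.2 i) ≤ f.2 i := min_le_left _ _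
      have h7 : min (f.2 i) (1 - f.2 i) ≤ 1 - f.2 i := min_le_right _ _
      constructor <;> linarith [h5.1, h5.2]
    · have h5 := abs_le.1 (hsd1 k i j)
      linarith [h5.1]
    · rw [hdg k i, hdiag k i]; ring
    · rw [Finset.sum_add_distrib, Finset.sum_add_distrib, ← Finset.mul_sum, ← Finset.mul_sum]
      have hif1 : (if i = k then f.2 i + s * d.2 i else 0)
          = (if i = k then f.2 i else 0) + s * (if i = k then d.2 i else 0) := by
        split_ifs <;> ring
      have hif2 : (if negIdx i = k then f.2 (negIdx i) + s * d.2 (negIdx i) else 0)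
          = (if negIdx i = k then f.2 (negIdx i) else 0)
            + s * (if negIdx i = k then d.2 (negIdx i) else 0) := by
        split_ifs <;> ring
      rw [hif1, hif2]
      linear_combination hcv i k + s * hcons i k
  have h1 : f + ε • d ∈ Pn n := hmem ε (by rw [abs_of_pos hεpos])
  have h2 : f - ε • d ∈ Pn n := by
    have : f - ε • d = f + (-ε) • d := by module
    rw [this]
    exact hmem (-ε) (by rw [abs_neg, abs_of_pos hεpos])
  exact extreme_perturb hf hεpos h1 h2

/-- Perturbation supported on a single commodity `k`. -/
lemma perturb_zero_k (hn : 2 ≤ n) {f : FlowPt n} (hf : f ∈ Set.extremePoints ℝ (Pn n))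
    (k : Fin (2*n)) (e : Fin (2*n) → Fin (2*n) → ℝ) (w : ℝ)
    (hdiag : ∀ i, e i i = 0)
    (hdiv : ∀ i, (if i = k then w else 0) + ∑ j, e j i
        = ∑ j, e i j + (if i = negIdx k then w else 0))
    (hs1 : ∀ i j, e i j ≠ 0 → 0 < f.1 k i j)
    (hs2 : w ≠ 0 → 0 < f.2 k ∧ f.2 k < 1) :
    (∀ i j, e i j = 0) ∧ w = 0 := by
  classical
  set d : FlowPt n := (fun k' => if k' = k then e else 0, fun i => if i = k then w else 0)
    with hd
  have hzero : d = 0 := by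
    apply perturb_zero hn hf
    · intro k' i
      simp only [hd]
      split_ifs with h
      · exact hdiag i
      · rfl
    · intro i k'
      by_cases hk : k' = k
      · subst hk
        simp only [hd, if_pos rfl]
        have he1 : (if i = k' then (if i = k' then w else 0) else 0) = (if i = k' then w else 0) := by
          split_ifs with h
          · rfl
          · rfl
        have he2 : (if negIdx i = k' then (if negIdx i = k' then w else 0) else 0)
            = (if i = negIdx k' then w else 0) := by
          by_cases h : negIdx i = k'
          · rw [if_pos h, if_pos h, if_pos ((negIdx_eq_iff i k').1 h)]
          · rw [if_neg h, if_neg (fun h' => h ((negIdx_eq_iff i k').2 h'))]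
        rw [he1, he2]
        exact hdiv i
      · simp only [hd]
        rw [if_neg hk]
        have hi1 : (if i = k' then (if i = k then w else 0) else 0) = 0 := by
          split_ifs with h1 h2
          · exact absurd (h1.symm.trans h2) hk
          · rfl
          · rfl
        have hi2 : (if negIdx i = k' then (if negIdx i = k then w else 0) else 0) = 0 := by
          split_ifs with h1 h2
          · exact absurd (h1.symm.trans h2) hk
          · rfl
          · rfl
        rw [hi1, hi2]
        simp
    · intro k' i j h
      simp only [hd] at h
      by_cases hk : k' = k
      · subst hk
        rw [if_pos rfl] at h
        exact hs1 i j h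
      · rw [if_neg hk] at h
        simp at h
    · intro i h
      simp only [hd] at h
      by_cases hk : i = k
      · subst hk
        rw [if_pos rfl] at h
        exact hs2 h
      · rw [if_neg hk] at h
        simp at h
  constructor
  · intro i j
    have := congrArg (fun z => z.1 k i j) hzero
    simpa [hd] using this
  · have := congrArg (fun z => z.2 k) hzero
    simpa [hd] using this

end Perturb

section PathDiv

variable {V : Type*} [DecidableEq V] [Fintype V]

lemma pInd_div (l : List V) (hne : l ≠ []) (hnd : l.Nodup) (i : V) :
    (if i = l.head hne then (1:ℝ) else 0) + ∑ j, pInd l j i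
      = ∑ j, pInd l i j + (if i = l.getLast hne then 1 else 0) := by
  rw [pInd_insum l hne hnd i, pInd_outsum l hne hnd i]
  have hhm : l.head hne ∈ l := List.head_mem hne
  have hlm : l.getLast hne ∈ l := List.getLast_mem hne
  by_cases h1 : i = l.head hne <;> by_cases h2 : i = l.getLast hne <;>
    by_cases h3 : i ∈ l <;> simp_all

end PathDiv

section Main

variable {n : ℕ}

lemma per_k (hn : 2 ≤ n) {f : FlowPt n} (hf : f ∈ Set.extremePoints ℝ (Pn n))
    (k : Fin (2*n)) :
    (∀ i j, f.1 k i j = 0 ∨ f.1 k i j = 1) ∧ (f.2 k = 0 ∨ f.2 k = 1) := by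
  classical
  obtain ⟨hb, hnn, hdg, hcv⟩ := (mem_Pn_iff f).1 hf.1
  have htk : negIdx k ≠ k := negIdx_ne (by omega) k
  set c : Fin (2*n) → Fin (2*n) → ℝ :=
    fun i j => f.1 k i j + (if i = negIdx k ∧ j = k then f.2 k else 0) with hc
  have hv0 : (0:ℝ) ≤ f.2 k := (hb k).1
  have hcpos : ∀ i j, 0 ≤ c i j := by
    intro i j
    simp only [hc]
    have := hnn k i j
    split_ifs <;> linarith
  have hcdiag : ∀ i, c i i = 0 := by
    intro i
    simp only [hc]
    rw [if_neg (fun h : i = negIdx k ∧ i = k => htk (h.1 ▸ h.2)), hdg k i, add_zero]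
  have hccons : ∀ i, ∑ j, c j i = ∑ j, c i j := by
    intro i
    simp only [hc]
    rw [Finset.sum_add_distrib, Finset.sum_add_distrib]
    have h1 : ∑ j, (if j = negIdx k ∧ i = k then f.2 k else 0)
        = (if i = k then f.2 k else 0) := by
      by_cases hik : i = k
      · simp [hik]
      · simp [hik]
    have h2 : ∑ j : Fin (2*n), (if i = negIdx k ∧ j = k then f.2 k else 0)
        = (if i = negIdx k then f.2 k else 0) := by
      by_cases hik : i = negIdx k
      · simp [hik]
      · simp [hik]
    rw [h1, h2]
    have h3 := hcv i k
    have h4 : (if i = k then f.2 i else 0) = (if i = k then f.2 k else 0) := by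
      split_ifs with h
      · rw [h]
      · rfl
    have h5 : (if negIdx i = k then f.2 (negIdx i) else 0)
        = (if i = negIdx k then f.2 k else 0) := by
      by_cases h : negIdx i = k
      · rw [if_pos h, if_pos ((negIdx_eq_iff i k).1 h), h]
      · rw [if_neg h, if_neg (fun h' => h ((negIdx_eq_iff i k).2 h'))]
    rw [h4, h5] at h3
    linarith
  -- Step: whenever some arc is positive, the terminal variable is positive and
  -- the direct edge from `negIdx k` to `k` is zero.
  have hkey : ∀ a b, 0 < c a b → f.1 k (negIdx k) k = 0 ∧ 0 < f.2 k := by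
    intro a b hab
    by_contra hcon
    obtain ⟨l, hne, hchain, hhead, hlast, hnd⟩ :=
      exists_nodup_path (cut_reach c hcpos hccons hab)
    have hab' : a ≠ b := by
      intro h
      rw [h] at hab
      exact absurd (hcdiag b) (ne_of_gt hab)
    set C : Fin (2*n) → Fin (2*n) → ℝ :=
      fun u w => pInd l u w + (if u = a ∧ w = b then (1:ℝ) else 0) with hC
    have hCsupp : ∀ u w, C u w ≠ 0 → 0 < c u w := by
      intro u w h
      simp only [hC] at h
      by_cases h1 : pInd l u w = 0
      · rw [h1, zero_add] at h
        have : u = a ∧ w = b := by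
          by_contra h2
          rw [if_neg h2] at h
          exact h rfl
        rw [this.1, this.2]
        exact hab
      · exact pInd_support l hchain u w h1
    have hCdiag : ∀ i, C i i = 0 := by
      intro i
      simp only [hC]
      have h1 : pInd l i i = 0 := by
        by_contra h
        exact absurd (hcdiag i) (ne_of_gt (pInd_support l hchain i i h))
      rw [h1, if_neg (fun h : i = a ∧ i = b => hab' (h.1 ▸ h.2 ▸ rfl)), add_zero]
    have hCdiv : ∀ i, (if i = k then (0:ℝ) else 0) + ∑ j, C j i
        = ∑ j, C i j + (if i = negIdx k then (0:ℝ) else 0) := by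
      intro i
      rw [ite_self, ite_self, zero_add, add_zero]
      simp only [hC]
      rw [Finset.sum_add_distrib, Finset.sum_add_distrib]
      have h1 : ∑ j, (if j = a ∧ i = b then (1:ℝ) else 0) = (if i = b then 1 else 0) := by
        by_cases hib : i = b
        · simp [hib]
        · simp [hib]
      have h2 : ∑ j : Fin (2*n), (if i = a ∧ j = b then (1:ℝ) else 0)
          = (if i = a then 1 else 0) := by
        by_cases hia : i = a
        · simp [hia]
        · simp [hia]
      rw [h1, h2]
      have h3 := pInd_div l hne hnd i
      rw [hhead, hlast] at h3
      linarith
    have hCs1 : ∀ u w, C u w ≠ 0 → 0 < f.1 k u w := by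
      intro u w h
      have hcuw := hCsupp u w h
      by_cases h2 : u = negIdx k ∧ w = k
      · -- the special slot: use the negation of the conclusion
        rw [h2.1, h2.2]
        rw [h2.1, h2.2] at hcuw
        simp only [hc, if_pos (show negIdx k = negIdx k ∧ k = k from ⟨rfl, rfl⟩)] at hcuw
        rcases eq_or_lt_of_le (hnn k (negIdx k) k) with heq | hlt
        · exfalso
          rcases eq_or_lt_of_le hv0 with hveq | hvlt
          · rw [← heq, ← hveq] at hcuw
            norm_num at hcuw
          · exact hcon ⟨heq.symm, hvlt⟩
        · exact hlt
      · simp only [hc, if_neg h2, add_zero] at hcuw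
        exact hcuw
    have hCzero := perturb_zero_k hn hf k C 0 hCdiag hCdiv hCs1 (fun h => absurd rfl h)
    have : C a b = 0 := hCzero.1 a b
    simp only [hC, eq_self_iff_true, and_self, if_true] at this
    have := pInd_nonneg l a b
    linarith
  by_cases hex : ∃ a b, 0 < c a b
  · obtain ⟨a0, b0, hab0⟩ := hex
    obtain ⟨hgtk, hvpos⟩ := hkey a0 b0 hab0
    have hctk : 0 < c (negIdx k) k := by
      simp only [hc, if_pos (show negIdx k = negIdx k ∧ k = k from ⟨rfl, rfl⟩), hgtk,
        zero_add]
      exact hvpos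
    obtain ⟨l, hne, hchain, hhead, hlast, hnd⟩ :=
      exists_nodup_path (cut_reach c hcpos hccons hctk)
    have hlrow : ∀ w, pInd l (negIdx k) w = 0 := by
      intro w
      rw [← hlast]
      exact pInd_getLast_row l hne hnd w
    have hsupl : ∀ u w, pInd l u w ≠ 0 → 0 < f.1 k u w := by
      intro u w h
      have hcuw : 0 < c u w := pInd_support l hchain u w h
      have hne2 : ¬(u = negIdx k ∧ w = k) := by
        rintro ⟨rfl, rfl⟩
        exact h (hlrow _)
      simpa only [hc, if_neg hne2, add_zero] using hcuw
    have hpdiag : ∀ i, pInd l i i = 0 := by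
      intro i
      by_contra h
      exact absurd (hcdiag i) (ne_of_gt (pInd_support l hchain i i h))
    have hdivl : ∀ i, (if i = k then (1:ℝ) else 0) + ∑ j, pInd l j i
        = ∑ j, pInd l i j + (if i = negIdx k then (1:ℝ) else 0) := by
      intro i
      have h3 := pInd_div l hne hnd i
      rwa [hhead, hlast] at h3
    have hv1 : f.2 k = 1 := by
      by_contra hne1
      have hvlt : f.2 k < 1 := lt_of_le_of_ne (hb k).2 hne1
      have := perturb_zero_k hn hf k (pInd l) 1 hpdiag hdivl hsupl
        (fun _ => ⟨hvpos, hvlt⟩)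
      exact one_ne_zero this.2
    -- conservation for the `g`-part with value 1
    have hgdiv : ∀ i, (if i = k then (1:ℝ) else 0) + ∑ j, f.1 k j i
        = ∑ j, f.1 k i j + (if i = negIdx k then (1:ℝ) else 0) := by
      intro i
      have h3 := hcv i k
      have h4 : (if i = k then f.2 i else 0) = (if i = k then (1:ℝ) else 0) := by
        split_ifs with h
        · rw [h, hv1]
        · rfl
      have h5 : (if negIdx i = k then f.2 (negIdx i) else 0)
          = (if i = negIdx k then (1:ℝ) else 0) := by
        by_cases h : negIdx i = k
        · rw [if_pos h, if_pos ((negIdx_eq_iff i k).1 h), h, hv1]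
        · rw [if_neg h, if_neg (fun h' => h ((negIdx_eq_iff i k).2 h'))]
      rw [h4, h5] at h3
      exact h3
    have hfinal := perturb_zero_k hn hf k (fun u w => f.1 k u w - pInd l u w) 0
      (fun i => by
        show f.1 k i i - pInd l i i = 0
        rw [hdg k i, hpdiag i, sub_zero])
      (by
        intro i
        show (if i = k then (0:ℝ) else 0) + ∑ j, (f.1 k j i - pInd l j i)
          = ∑ j, (f.1 k i j - pInd l i j) + (if i = negIdx k then (0:ℝ) else 0)
        rw [ite_self, ite_self, zero_add, add_zero]
        rw [Finset.sum_sub_distrib, Finset.sum_sub_distrib]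
        have h6 := hgdiv i
        have h7 := hdivl i
        linarith)
      (by
        intro u w h
        have h' : f.1 k u w - pInd l u w ≠ 0 := h
        by_cases h1 : pInd l u w = 0
        · rw [h1, sub_zero] at h'
          exact lt_of_le_of_ne (hnn k u w) (Ne.symm h')
        · exact hsupl u w h1)
      (fun h => absurd rfl h)
    refine ⟨fun i j => ?_, Or.inr hv1⟩
    have h8 : f.1 k i j = pInd l i j := by
      have h9 : f.1 k i j - pInd l i j = 0 := hfinal.1 i j
      linarith
    rw [h8]
    exact pInd_zero_or_one l hnd i j
  · push_neg at hex
    have hc0 : ∀ a b, c a b = 0 := fun a b => le_antisymm (hex a b) (hcpos a b)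
    have hg0 : ∀ i j, f.1 k i j = 0 := by
      intro i j
      have h1 := hc0 i j
      have h2 := hnn k i j
      simp only [hc] at h1
      split_ifs at h1 <;> linarith
    have hv00 : f.2 k = 0 := by
      have h1 := hc0 (negIdx k) k
      simp only [hc, eq_self_iff_true, and_self, if_true] at h1
      have h2 := hnn k (negIdx k) k
      linarith
    exact ⟨fun i j => Or.inl (hg0 i j), Or.inl hv00⟩

end Main


/-- Every extreme point of the multicommodity flow polytope `P_n`
has all coordinates equal to `0` or `1`. -/
theorem stmt_10 (n : ℕ) (hn : 2 ≤ n)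
    (f : FlowPt n) (hf : f ∈ Set.extremePoints ℝ (Pn n)) :
    (∀ k i j, f.1 k i j = 0 ∨ f.1 k i j = 1) ∧ (∀ i, f.2 i = 0 ∨ f.2 i = 1) := by
  exact ⟨fun k => (per_k hn hf k).1, fun i => (per_k hn hf i).2⟩
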